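/- Let X and M' be nonempty finite sets, let O be a stochastic kernel from X to M' with Dobrushin coefficient δ(O), and let μ, ν be probability vectors on X such that μ(x) > 0 implies ν(x) > 0 for all x ∈ X. With N_ρ(m') := Σ_{x∈X} O(m'|x)ρ(x) and Bayes posteriors ρ̄_{m'}(x) := O(m'|x)ρ(x)/N_ρ(m') (defined when N_ρ(m') > 0), we have Σ_{m'∈M' : N_μ(m')>0} N_μ(m') · ‖μ̄_{m'} − ν̄_{m'}‖_TV ≤ (2 − δ(O)) · ‖μ − ν‖_TV. (This is the paper's Lemma 8 (prior_bound): the expected total variation between Bayes posteriors, where the observation is drawn from the μ-output distribution, is bounded by (2 − δ(O)) times the total variation between the priors.) -/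

import Mathlib

open Finset

lemma dobrushin_contraction {X M' : Type*} [Fintype X] [Fintype M'] [Nonempty X]
    (O : X → M' → ℝ) (hO_nonneg : ∀ x m', 0 ≤ O x m')
    (hO_sum : ∀ x, ∑ m', O x m' = 1)
    (f : X → ℝ) (hf : ∑ x, f x = 0) :
    ∑ m', |∑ x, O x m' * f x| ≤
      (1 - Finset.univ.inf' Finset.univ_nonempty
            (fun p : X × X => ∑ m', min (O p.1 m') (O p.2 m'))) * ∑ x, |f x| := by
  set δ := Finset.univ.inf' Finset.univ_nonempty
            (fun p : X × X => ∑ m', min (O p.1 m') (O p.2 m')) with hδ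
  set fp : X → ℝ := fun x => max (f x) 0 with hfp
  set fm : X → ℝ := fun x => max (-f x) 0 with hfm
  have hfp_nonneg : ∀ x, 0 ≤ fp x := fun x => le_max_right _ _
  have hfm_nonneg : ∀ x, 0 ≤ fm x := fun x => le_max_right _ _
  have hdiff : ∀ x, f x = fp x - fm x := fun x => by
    simp only [hfp, hfm]
    rcases le_total (f x) 0 with h | h
    · rw [max_eq_right h, max_eq_left (by linarith)]; ring
    · rw [max_eq_left h, max_eq_right (by linarith)]; ring
  have habs : ∀ x, |f x| = fp x + fm x := fun x => by
    simp only [hfp, hfm]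
    rcases le_total (f x) 0 with h | h
    · rw [max_eq_right h, max_eq_left (by linarith), abs_of_nonpos h]; ring
    · rw [max_eq_left h, max_eq_right (by linarith), abs_of_nonneg h]; ring
  set s := ∑ x, fp x with hs
  have hsm : ∑ x, fm x = s := by
    have h0 : ∑ x, (fp x - fm x) = 0 := by
      rw [show (∑ x, (fp x - fm x)) = ∑ x, f x from Finset.sum_congr rfl fun x _ => (hdiff x).symm]
      exact hf
    rw [Finset.sum_sub_distrib] at h0; linarith
  have hs_nonneg : 0 ≤ s := Finset.sum_nonneg fun x _ => hfp_nonneg x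
  set a : M' → ℝ := fun m' => ∑ x, O x m' * fp x with ha
  set b : M' → ℝ := fun m' => ∑ x, O x m' * fm x with hb
  have hab : ∀ m', ∑ x, O x m' * f x = a m' - b m' := fun m' => by
    simp only [ha, hb, ← Finset.sum_sub_distrib]
    exact Finset.sum_congr rfl fun x _ => by rw [hdiff x]; ring
  have ha_nonneg : ∀ m', 0 ≤ a m' := fun m' =>
    Finset.sum_nonneg fun x _ => mul_nonneg (hO_nonneg x m') (hfp_nonneg x)
  have hb_nonneg : ∀ m', 0 ≤ b m' := fun m' =>
    Finset.sum_nonneg fun x _ => mul_nonneg (hO_nonneg x m') (hfm_nonneg x)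
  have hsuma : ∑ m', a m' = s := by
    rw [ha, Finset.sum_comm, hs]
    refine Finset.sum_congr rfl fun x _ => ?_
    rw [← Finset.sum_mul, hO_sum x, one_mul]
  have hsumb : ∑ m', b m' = s := by
    rw [hb, Finset.sum_comm, ← hsm]
    refine Finset.sum_congr rfl fun x _ => ?_
    rw [← Finset.sum_mul, hO_sum x, one_mul]
  have habsf : ∑ x, |f x| = 2 * s := by
    rw [Finset.sum_congr rfl fun x _ => habs x, Finset.sum_add_distrib, hsm, ← hs]; ring
  rcases eq_or_lt_of_le hs_nonneg with hs0 | hs0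
  · -- s = 0 : f = 0
    have h1 : ∀ x, fp x = 0 := fun x =>
      (Finset.sum_eq_zero_iff_of_nonneg (fun x _ => hfp_nonneg x)).mp hs0.symm x (Finset.mem_univ x)
    have h2 : ∀ x, fm x = 0 := fun x =>
      (Finset.sum_eq_zero_iff_of_nonneg (fun x _ => hfm_nonneg x)).mp (hsm.trans hs0.symm) x (Finset.mem_univ x)
    have hf0 : ∀ x, f x = 0 := fun x => by rw [hdiff x, h1 x, h2 x]; ring
    have hz : ∀ m', |∑ x, O x m' * f x| = 0 := fun m' => by
      rw [Finset.sum_congr rfl fun x _ => by rw [hf0 x, mul_zero]]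
      simp
    rw [Finset.sum_congr rfl fun m' _ => hz m', habsf, ← hs0]
    simp
  · -- s > 0
    have hmin : ∀ m', ∑ x, ∑ y, fp x * fm y * min (O x m') (O y m') ≤ s * min (a m') (b m') := by
      intro m'
      have hsa : s * a m' = ∑ x, ∑ y, fp x * fm y * O x m' := by
        rw [← hsm, ha, Finset.sum_mul_sum, Finset.sum_comm]
        exact Finset.sum_congr rfl fun x _ => Finset.sum_congr rfl fun y _ => by ring
      have hsb : s * b m' = ∑ x, ∑ y, fp x * fm y * O y m' := by
        rw [hs, hb, Finset.sum_mul_sum]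
        exact Finset.sum_congr rfl fun x _ => Finset.sum_congr rfl fun y _ => by ring
      have hA : ∑ x, ∑ y, fp x * fm y * min (O x m') (O y m') ≤ s * a m' := by
        rw [hsa]
        refine Finset.sum_le_sum fun x _ => Finset.sum_le_sum fun y _ => ?_
        exact mul_le_mul_of_nonneg_left (min_le_left _ _)
          (mul_nonneg (hfp_nonneg x) (hfm_nonneg y))
      have hB : ∑ x, ∑ y, fp x * fm y * min (O x m') (O y m') ≤ s * b m' := by
        rw [hsb]
        refine Finset.sum_le_sum fun x _ => Finset.sum_le_sum fun y _ => ?_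
        exact mul_le_mul_of_nonneg_left (min_le_right _ _)
          (mul_nonneg (hfp_nonneg x) (hfm_nonneg y))
      rcases le_total (a m') (b m') with h | h
      · rw [min_eq_left h]; exact hA
      · rw [min_eq_right h]; exact hB
    have hsummin : δ * (s * s) ≤ s * ∑ m', min (a m') (b m') := by
      have h1 : ∑ m', ∑ x, ∑ y, fp x * fm y * min (O x m') (O y m')
          ≤ ∑ m', s * min (a m') (b m') := Finset.sum_le_sum fun m' _ => hmin m'
      have h2 : δ * (s * s) ≤ ∑ m', ∑ x, ∑ y, fp x * fm y * min (O x m') (O y m') := by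
        rw [Finset.sum_comm]
        have : ∀ x, ∑ m', ∑ y, fp x * fm y * min (O x m') (O y m')
            = ∑ y, fp x * fm y * ∑ m', min (O x m') (O y m') := by
          intro x
          rw [Finset.sum_comm]
          exact Finset.sum_congr rfl fun y _ => by rw [Finset.mul_sum]
        rw [Finset.sum_congr rfl fun x _ => this x]
        have hge : ∀ x y, fp x * fm y * δ ≤ fp x * fm y * ∑ m', min (O x m') (O y m') := by
          intro x y
          exact mul_le_mul_of_nonneg_left
            (Finset.inf'_le _ (Finset.mem_univ ((x, y) : X × X)))
            (mul_nonneg (hfp_nonneg x) (hfm_nonneg y))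
        have inner : ∀ x, ∑ y, fp x * fm y * δ = fp x * ((∑ y, fm y) * δ) := fun x => by
          rw [Finset.sum_mul, Finset.mul_sum]
          exact Finset.sum_congr rfl fun y _ => by ring
        calc δ * (s * s) = ∑ x, ∑ y, fp x * fm y * δ := by
              rw [Finset.sum_congr rfl fun x _ => inner x, ← Finset.sum_mul, hsm, ← hs]
              ring
          _ ≤ _ := Finset.sum_le_sum fun x _ => Finset.sum_le_sum fun y _ => hge x y
      calc δ * (s * s) ≤ _ := h2
        _ ≤ ∑ m', s * min (a m') (b m') := h1
        _ = s * ∑ m', min (a m') (b m') := by rw [Finset.mul_sum]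
    have hminsum : δ * s ≤ ∑ m', min (a m') (b m') := by
      have := (mul_le_mul_iff_right₀ hs0).mp (by linarith [hsummin] : s * (δ * s) ≤ s * ∑ m', min (a m') (b m'))
      linarith
    have hid : ∀ m', |a m' - b m'| = a m' + b m' - 2 * min (a m') (b m') := by
      intro m'
      rcases le_total (a m') (b m') with h | h
      · rw [min_eq_left h, abs_of_nonpos (by linarith)]; ring
      · rw [min_eq_right h, abs_of_nonneg (by linarith)]; ring
    calc ∑ m', |∑ x, O x m' * f x| = ∑ m', (a m' + b m' - 2 * min (a m') (b m')) := by
          refine Finset.sum_congr rfl fun m' _ => ?_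
          rw [hab m', hid m']
      _ = s + s - 2 * ∑ m', min (a m') (b m') := by
          rw [Finset.sum_sub_distrib, Finset.sum_add_distrib, hsuma, hsumb, ← Finset.mul_sum]
      _ ≤ s + s - 2 * (δ * s) := by linarith
      _ = (1 - δ) * (2 * s) := by ring
      _ = (1 - δ) * ∑ x, |f x| := by rw [habsf]

/-- paper's Lemma 8: the expected total variation between Bayes
posteriors, with the observation drawn from the μ-output distribution, is
bounded by `(2 − δ(O))·‖μ − ν‖_TV`, where `δ(O)` is the Dobrushin coefficient
`min_{x,x'} Σ_{m'} min(O(m'|x), O(m'|x'))`. -/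
theorem bayes_posterior_expected_tv_dobrushin_bound
    {X M' : Type*} [Fintype X] [Fintype M'] [Nonempty X] [Nonempty M']
    (O : X → M' → ℝ) (hO_nonneg : ∀ x m', 0 ≤ O x m')
    (hO_sum : ∀ x, ∑ m', O x m' = 1)
    (μ ν : X → ℝ)
    (hμ_nonneg : ∀ x, 0 ≤ μ x) (hμ_sum : ∑ x, μ x = 1)
    (hν_nonneg : ∀ x, 0 ≤ ν x) (hν_sum : ∑ x, ν x = 1)
    (habs : ∀ x, 0 < μ x → 0 < ν x) :
    ∑ m' ∈ Finset.univ.filter (fun m' : M' => 0 < ∑ x, O x m' * μ x),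
        (∑ x, O x m' * μ x) *
          (∑ x, |O x m' * μ x / (∑ y, O y m' * μ y)
                  - O x m' * ν x / (∑ y, O y m' * ν y)|)
      ≤ (2 - Finset.univ.inf' Finset.univ_nonempty
            (fun p : X × X => ∑ m', min (O p.1 m') (O p.2 m'))) *
          ∑ x, |μ x - ν x| := by
  set δ := Finset.univ.inf' Finset.univ_nonempty
            (fun p : X × X => ∑ m', min (O p.1 m') (O p.2 m')) with hδ
  set Nμ : M' → ℝ := fun m' => ∑ x, O x m' * μ x with hNμ
  set Nν : M' → ℝ := fun m' => ∑ x, O x m' * ν x with hNν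
  set D := ∑ x, |μ x - ν x| with hD
  -- Step 1: for m' with Nμ m' > 0, also Nν m' > 0
  have hNν_pos : ∀ m', 0 < Nμ m' → 0 < Nν m' := by
    intro m' hpos
    have hex : ∃ x, 0 < O x m' * μ x := by
      by_contra h
      push_neg at h
      have : Nμ m' ≤ 0 := Finset.sum_nonpos fun x _ => h x
      linarith
    obtain ⟨x, hx⟩ := hex
    rcases mul_pos_iff.mp hx with ⟨hO, hμ⟩ | ⟨hO, _⟩
    · have hνx : 0 < ν x := habs x hμ
      have : O x m' * ν x ≤ Nν m' :=
        Finset.single_le_sum (f := fun y => O y m' * ν y)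
          (fun y _ => mul_nonneg (hO_nonneg y m') (hν_nonneg y)) (Finset.mem_univ x)
      nlinarith
    · exact absurd hO (not_lt.mpr (hO_nonneg x m'))
  -- Step 2: per-m' bound
  have hkey : ∀ m', 0 < Nμ m' →
      Nμ m' * (∑ x, |O x m' * μ x / Nμ m' - O x m' * ν x / Nν m'|)
        ≤ (∑ x, O x m' * |μ x - ν x|) + |Nν m' - Nμ m'| := by
    intro m' hμpos
    have hνpos := hNν_pos m' hμpos
    have hterm : ∀ x,
        Nμ m' * |O x m' * μ x / Nμ m' - O x m' * ν x / Nν m'|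
          ≤ O x m' * |μ x - ν x| + (O x m' * ν x / Nν m') * |Nν m' - Nμ m'| := by
      intro x
      have heq : Nμ m' * (O x m' * μ x / Nμ m' - O x m' * ν x / Nν m')
          = (O x m' * μ x - O x m' * ν x) + (O x m' * ν x / Nν m') * (Nν m' - Nμ m') := by
        field_simp
        ring
      calc Nμ m' * |O x m' * μ x / Nμ m' - O x m' * ν x / Nν m'|
          = |Nμ m' * (O x m' * μ x / Nμ m' - O x m' * ν x / Nν m')| := by
            rw [abs_mul, abs_of_pos hμpos]
        _ = |(O x m' * μ x - O x m' * ν x) + (O x m' * ν x / Nν m') * (Nν m' - Nμ m')| := by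
            rw [heq]
        _ ≤ |O x m' * μ x - O x m' * ν x| + |(O x m' * ν x / Nν m') * (Nν m' - Nμ m')| :=
            abs_add_le _ _
        _ = O x m' * |μ x - ν x| + (O x m' * ν x / Nν m') * |Nν m' - Nμ m'| := by
            rw [← mul_sub, abs_mul, abs_of_nonneg (hO_nonneg x m'), abs_mul,
              abs_of_nonneg (div_nonneg (mul_nonneg (hO_nonneg x m') (hν_nonneg x)) hνpos.le)]
    calc Nμ m' * (∑ x, |O x m' * μ x / Nμ m' - O x m' * ν x / Nν m'|)
        = ∑ x, Nμ m' * |O x m' * μ x / Nμ m' - O x m' * ν x / Nν m'| := Finset.mul_sum _ _ _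
      _ ≤ ∑ x, (O x m' * |μ x - ν x| + (O x m' * ν x / Nν m') * |Nν m' - Nμ m'|) :=
          Finset.sum_le_sum fun x _ => hterm x
      _ = (∑ x, O x m' * |μ x - ν x|)
            + (∑ x, O x m' * ν x / Nν m') * |Nν m' - Nμ m'| := by
          rw [Finset.sum_add_distrib, Finset.sum_mul]
      _ = (∑ x, O x m' * |μ x - ν x|) + |Nν m' - Nμ m'| := by
          have : ∑ x, O x m' * ν x / Nν m' = 1 := by
            rw [← Finset.sum_div]
            exact div_self hνpos.ne'
          rw [this, one_mul]
  -- Step 3: sum up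
  have hT1_nonneg : ∀ m', 0 ≤ ∑ x, O x m' * |μ x - ν x| := fun m' =>
    Finset.sum_nonneg fun x _ => mul_nonneg (hO_nonneg x m') (abs_nonneg _)
  have hsum1 : ∑ m', (∑ x, O x m' * |μ x - ν x|) = D := by
    rw [Finset.sum_comm, hD]
    refine Finset.sum_congr rfl fun x _ => ?_
    rw [← Finset.sum_mul, hO_sum x, one_mul]
  have hsum2 : ∑ m', |Nν m' - Nμ m'| ≤ (1 - δ) * D := by
    have hcontr := dobrushin_contraction O hO_nonneg hO_sum (fun x => ν x - μ x)
      (by rw [Finset.sum_sub_distrib, hν_sum, hμ_sum]; ring)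
    have h1 : ∀ m', |Nν m' - Nμ m'| = |∑ x, O x m' * (ν x - μ x)| := by
      intro m'
      rw [hNν, hNμ]
      congr 1
      rw [← Finset.sum_sub_distrib]
      exact Finset.sum_congr rfl fun x _ => by ring
    have h2 : ∑ x, |ν x - μ x| = D := by
      rw [hD]; exact Finset.sum_congr rfl fun x _ => abs_sub_comm _ _
    rw [Finset.sum_congr rfl fun m' _ => h1 m']
    calc ∑ m', |∑ x, O x m' * (ν x - μ x)| ≤ (1 - δ) * ∑ x, |ν x - μ x| := hcontr
      _ = (1 - δ) * D := by rw [h2]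
  calc ∑ m' ∈ Finset.univ.filter (fun m' : M' => 0 < Nμ m'),
        Nμ m' * (∑ x, |O x m' * μ x / Nμ m' - O x m' * ν x / Nν m'|)
      ≤ ∑ m' ∈ Finset.univ.filter (fun m' : M' => 0 < Nμ m'),
          ((∑ x, O x m' * |μ x - ν x|) + |Nν m' - Nμ m'|) := by
        refine Finset.sum_le_sum fun m' hm' => ?_
        exact hkey m' (Finset.mem_filter.mp hm').2
    _ ≤ ∑ m', ((∑ x, O x m' * |μ x - ν x|) + |Nν m' - Nμ m'|) := by
        refine Finset.sum_le_sum_of_subset_of_nonneg (Finset.filter_subset _ _) ?_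
        intro m' _ _
        exact add_nonneg (hT1_nonneg m') (abs_nonneg _)
    _ = (∑ m', (∑ x, O x m' * |μ x - ν x|)) + ∑ m', |Nν m' - Nμ m'| :=
        Finset.sum_add_distrib
    _ ≤ D + (1 - δ) * D := by
        rw [hsum1]
        exact add_le_add_right hsum2 _
    _ = (2 - δ) * D := by ring
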